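/- Let $G$ be a topological abelian group acting continuously on a compact metric space $X$, and let $y \in X$ be a Bohr almost periodic point. Then $\mathrm{cls}_X G(y)$, equipped with the induced operation $\diamond$ satisfying $g(y) \diamond h(y) = (gh)(y)$, is a compact abelian topological group (in particular every element has an inverse and inversion is continuous). -/

import Mathlib

open MulAction Set Pointwise Filter Topology Uniformity
set_option linter.unusedSectionVars false

/-- A point `y` is Bohr almost periodic for the action of `G` on `X`. -/
def IsBohrAlmostPeriodicPt {G X : Type*} [Monoid G] [TopologicalSpace G]
    [MetricSpace X] [MulAction G X] (y : X) : Prop :=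
  ∀ ε > (0 : ℝ), ∃ L : Set G, IsCompact L ∧
    {τ : G | ∀ g : G, dist (g • y) ((τ * g) • y) < ε} * L = Set.univ


section
variable {G X : Type*} [CommGroup G] [TopologicalSpace G] [IsTopologicalGroup G]
  [MetricSpace X] [CompactSpace X] [MulAction G X] [ContinuousSMul G X]

lemma equi_of_compact {L : Set G} (hL : IsCompact L) {ε : ℝ} (hε : 0 < ε) :
    ∃ δ > 0, ∀ l ∈ L, ∀ x x' : X, dist x x' < δ → dist (l • x) (l • x') < ε := by
  letI : UniformSpace G := IsTopologicalGroup.rightUniformSpace G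
  have hr : {p : X × X | dist p.1 p.2 < ε} ∈ 𝓤 X := Metric.dist_mem_uniformity hε
  have h := (hL.prod isCompact_univ).uniformContinuousAt_of_continuousAt
      (fun p : G × X => p.1 • p.2) (fun a _ => (continuous_smul (M := G) (X := X)).continuousAt) hr
  obtain ⟨u, hu, v, hv, huv⟩ := entourageProd_subset h
  obtain ⟨δ, hδ, hδv⟩ := Metric.mem_uniformity_dist.1 hv
  refine ⟨δ, hδ, fun l hl x x' hxx => ?_⟩
  have hm : (((l, x), (l, x')) : (G × X) × (G × X)) ∈ entourageProd u v :=
    ⟨refl_mem_uniformity hu, hδv hxx⟩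
  exact huv hm ⟨hl, mem_univ x⟩

variable (y : X)

lemma bohrL1 (hy : IsBohrAlmostPeriodicPt (G := G) y) {ε : ℝ} (hε : 0 < ε) :
    ∃ δ > 0, ∀ g g' : G, dist (g • y) (g' • y) < δ →
      ∀ h : G, dist ((g * h) • y) ((g' * h) • y) < ε := by
  obtain ⟨L, hLc, hLeq⟩ := hy (ε / 3) (by positivity)
  obtain ⟨δ, hδ, hδL⟩ := equi_of_compact (X := X) hLc (show (0:ℝ) < ε / 3 by positivity)
  refine ⟨δ, hδ, fun g g' hd h => ?_⟩
  have hh : h ∈ {τ : G | ∀ g : G, dist (g • y) ((τ * g) • y) < ε / 3} * L := by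
    rw [hLeq]; exact mem_univ h
  obtain ⟨τ, hτ, l, hl, rfl⟩ := Set.mem_mul.1 hh
  have e1 : g * (τ * l) = τ * (l * g) := by rw [mul_comm g (τ * l), mul_assoc]
  have e2 : g' * (τ * l) = τ * (l * g') := by rw [mul_comm g' (τ * l), mul_assoc]
  rw [e1, e2]
  have h1 : dist ((τ * (l * g)) • y) ((l * g) • y) < ε / 3 := by
    have := hτ (l * g); rwa [dist_comm] at this
  have h2 : dist ((l * g) • y) ((l * g') • y) < ε / 3 := by
    have := hδL l hl (g • y) (g' • y) hd
    simpa [mul_smul] using this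
  have h3 : dist ((l * g') • y) ((τ * (l * g')) • y) < ε / 3 := hτ (l * g')
  calc dist ((τ * (l * g)) • y) ((τ * (l * g')) • y)
      ≤ dist ((τ * (l * g)) • y) ((l * g) • y) + dist ((l * g) • y) ((l * g') • y)
        + dist ((l * g') • y) ((τ * (l * g')) • y) := dist_triangle4 _ _ _ _
    _ < ε / 3 + ε / 3 + ε / 3 := by linarith
    _ = ε := by ring

lemma bohrL2 (hy : IsBohrAlmostPeriodicPt (G := G) y) {ε : ℝ} (hε : 0 < ε) :
    ∃ δ > 0, ∀ g g' : G, dist (g • y) (g' • y) < δ →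
      ∀ z ∈ closure (orbit G y), dist (g • z) (g' • z) ≤ ε := by
  obtain ⟨δ, hδ, H⟩ := bohrL1 y hy hε
  refine ⟨δ, hδ, fun g g' hd z hz => ?_⟩
  have hcl : IsClosed {w : X | dist (g • w) (g' • w) ≤ ε} :=
    isClosed_le (((continuous_const_smul g).dist (continuous_const_smul g'))) continuous_const
  refine closure_minimal ?_ hcl hz
  rintro _ ⟨h, rfl⟩
  simpa [smul_smul] using (H g g' hd h).le

lemma bohrL3 (hy : IsBohrAlmostPeriodicPt (G := G) y) {ε : ℝ} (hε : 0 < ε) :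
    ∃ δ > 0, ∀ z ∈ closure (orbit G y), ∀ z' ∈ closure (orbit G y),
      dist z z' < δ → ∀ g : G, dist (g • z) (g • z') ≤ ε := by
  obtain ⟨δ, hδ, H⟩ := bohrL1 y hy hε
  refine ⟨δ, hδ, fun z hz z' hz' hd g => ?_⟩
  obtain ⟨u, hu, hul⟩ := mem_closure_iff_seq_limit.1 hz
  obtain ⟨u', hu', hul'⟩ := mem_closure_iff_seq_limit.1 hz'
  choose v hv using hu
  choose v' hv' using hu'
  have hv2 : ∀ n, v n • y = u n := fun n => hv n
  have hv'2 : ∀ n, v' n • y = u' n := fun n => hv' n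
  have hlim : Tendsto (fun n => dist (g • u n) (g • u' n)) atTop
      (𝓝 (dist (g • z) (g • z'))) :=
    (((continuous_const_smul g).tendsto z).comp hul).dist
      (((continuous_const_smul g).tendsto z').comp hul')
  refine le_of_tendsto hlim ?_
  have hev : ∀ᶠ n in atTop, dist (u n) (u' n) < δ :=
    (hul.dist hul').eventually_lt_const hd
  filter_upwards [hev] with n hn
  have hH := H (v n) (v' n) (by rwa [hv2 n, hv'2 n]) g
  rw [mul_comm (v n) g, mul_comm (v' n) g] at hH
  rw [← hv2 n, ← hv'2 n, ← mul_smul, ← mul_smul]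
  exact hH.le

lemma bohrL4 (hy : IsBohrAlmostPeriodicPt (G := G) y) {ε : ℝ} (hε : 0 < ε) :
    ∃ δ > 0, ∀ g g' : G, dist (g • y) (g' • y) < δ →
      dist (g⁻¹ • y) (g'⁻¹ • y) < ε := by
  obtain ⟨δ, hδ, H⟩ := bohrL1 y hy hε
  refine ⟨δ, hδ, fun g g' hd => ?_⟩
  have := H g g' hd (g⁻¹ * g'⁻¹)
  have e1 : g * (g⁻¹ * g'⁻¹) = g'⁻¹ := by group
  have e2 : g' * (g⁻¹ * g'⁻¹) = g⁻¹ := by rw [mul_comm g⁻¹ g'⁻¹]; group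
  rw [e1, e2] at this
  rwa [dist_comm] at this
end

section
variable {G X : Type*} [CommGroup G] [TopologicalSpace G] [IsTopologicalGroup G]
  [MetricSpace X] [CompactSpace X] [MulAction G X] [ContinuousSMul G X]

variable (G) in
/-- Choose a group element sending `y` to `a`, when `a` is in the orbit of `y`. -/
noncomputable def bohrPick (y a : X) : G :=
  open scoped Classical in
  if h : a ∈ orbit G y then h.choose else 1

lemma bohrPick_spec {y a : X} (h : a ∈ orbit G y) : bohrPick G y a • y = a := by
  classical
  rw [bohrPick]
  rw [dif_pos h]
  exact h.choose_spec

variable (y : X)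

lemma smul_mem_closure_orbit {g : G} {z : X} (hz : z ∈ closure (orbit G y)) :
    g • z ∈ closure (orbit G y) := by
  have hmt : MapsTo (fun w => g • w) (orbit G y) (orbit G y) := by
    rintro _ ⟨h, rfl⟩
    exact ⟨g * h, by simp [mul_smul]⟩
  exact hmt.closure (continuous_const_smul g) hz

variable (G) in
/-- The induced binary operation on the orbit closure. -/
noncomputable def bohrOp (x z : X) : X :=
  letI : Nonempty X := ⟨y⟩
  limUnder (𝓝[orbit G y] x) (fun a => bohrPick G y a • z)

variable (G) in
/-- The induced inversion on the orbit closure. -/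
noncomputable def bohrInv (x : X) : X :=
  letI : Nonempty X := ⟨y⟩
  limUnder (𝓝[orbit G y] x) (fun a => (bohrPick G y a)⁻¹ • y)

lemma bohr_exists_lim {x : X} (hx : x ∈ closure (orbit G y)) (f : X → X)
    (hf : ∀ ε > (0:ℝ), ∃ δ > (0:ℝ), ∀ a ∈ orbit G y, ∀ a' ∈ orbit G y,
      dist a a' < δ → dist (f a) (f a') ≤ ε) :
    letI : Nonempty X := ⟨y⟩
    Tendsto f (𝓝[orbit G y] x) (𝓝 (limUnder (𝓝[orbit G y] x) f)) := by
  letI : Nonempty X := ⟨y⟩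
  haveI : (𝓝[orbit G y] x).NeBot := mem_closure_iff_nhdsWithin_neBot.1 hx
  apply tendsto_nhds_limUnder
  have hc : Cauchy (map f (𝓝[orbit G y] x)) := by
    rw [Metric.cauchy_iff]
    refine ⟨map_neBot, fun ε hε => ?_⟩
    obtain ⟨δ, hδ, H⟩ := hf (ε / 2) (by positivity)
    refine ⟨f '' (orbit G y ∩ Metric.ball x (δ / 2)), image_mem_map
      (inter_mem_nhdsWithin _ (Metric.ball_mem_nhds x (by positivity))), ?_⟩
    rintro _ ⟨a, ⟨ha, hab⟩, rfl⟩ _ ⟨a', ⟨ha', hab'⟩, rfl⟩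
    have hd : dist a a' < δ := by
      have h3 := dist_triangle_right a a' x
      simp only [Metric.mem_ball] at hab hab'
      linarith
    have := H a ha a' ha' hd
    linarith
  obtain ⟨w, hw⟩ := CompleteSpace.complete hc
  exact ⟨w, hw⟩
end

section
variable {G X : Type*} [CommGroup G] [TopologicalSpace G] [IsTopologicalGroup G]
  [MetricSpace X] [CompactSpace X] [MulAction G X] [ContinuousSMul G X]
variable (y : X)

lemma bohrOp_tendsto (hy : IsBohrAlmostPeriodicPt (G := G) y) {x z : X} (hx : x ∈ closure (orbit G y))
    (hz : z ∈ closure (orbit G y)) :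
    Tendsto (fun a => bohrPick G y a • z) (𝓝[orbit G y] x) (𝓝 (bohrOp G y x z)) := by
  apply bohr_exists_lim y hx
  intro ε hε
  obtain ⟨δ, hδ, H⟩ := bohrL2 y hy hε
  refine ⟨δ, hδ, fun a ha a' ha' hd => ?_⟩
  exact H (bohrPick G y a) (bohrPick G y a')
    (by rwa [bohrPick_spec ha, bohrPick_spec ha']) z hz

lemma bohrOp_mem (hy : IsBohrAlmostPeriodicPt (G := G) y) {x z : X} (hx : x ∈ closure (orbit G y))
    (hz : z ∈ closure (orbit G y)) : bohrOp G y x z ∈ closure (orbit G y) := by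
  haveI : (𝓝[orbit G y] x).NeBot := mem_closure_iff_nhdsWithin_neBot.1 hx
  exact isClosed_closure.mem_of_tendsto (bohrOp_tendsto y hy hx hz)
    (Eventually.of_forall fun a => smul_mem_closure_orbit y hz)

lemma bohrOp_eval (hy : IsBohrAlmostPeriodicPt (G := G) y) (g : G) {z : X} (hz : z ∈ closure (orbit G y)) :
    bohrOp G y (g • y) z = g • z := by
  have hgy : g • y ∈ closure (orbit G y) := subset_closure ⟨g, rfl⟩
  haveI : (𝓝[orbit G y] (g • y)).NeBot := mem_closure_iff_nhdsWithin_neBot.1 hgy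
  refine tendsto_nhds_unique (bohrOp_tendsto y hy hgy hz) ?_
  rw [Metric.tendsto_nhds]
  intro ε hε
  obtain ⟨δ, hδ, H⟩ := bohrL2 y hy (half_pos hε)
  filter_upwards [self_mem_nhdsWithin,
    mem_nhdsWithin_of_mem_nhds (Metric.ball_mem_nhds (g • y) hδ)] with a ha hab
  have h1 : dist (bohrPick G y a • y) (g • y) < δ := by
    rw [bohrPick_spec ha]; exact hab
  have := H (bohrPick G y a) g h1 z hz
  linarith

lemma bohrOp_est (hy : IsBohrAlmostPeriodicPt (G := G) y) {ε : ℝ} (hε : 0 < ε) :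
    ∃ δ > 0, ∀ x ∈ closure (orbit G y), ∀ x' ∈ closure (orbit G y),
      ∀ z ∈ closure (orbit G y), ∀ z' ∈ closure (orbit G y),
      dist x x' < δ → dist z z' < δ → dist (bohrOp G y x z) (bohrOp G y x' z') ≤ ε := by
  obtain ⟨δ₂, hδ₂, H2⟩ := bohrL2 y hy (show (0:ℝ) < ε / 2 by positivity)
  obtain ⟨δ₃, hδ₃, H3⟩ := bohrL3 y hy (show (0:ℝ) < ε / 2 by positivity)
  refine ⟨min (δ₂ / 4) δ₃, by positivity, fun x hx x' hx' z hz z' hz' hxx hzz => ?_⟩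
  refine le_of_forall_pos_le_add fun η hη => ?_
  haveI : (𝓝[orbit G y] x).NeBot := mem_closure_iff_nhdsWithin_neBot.1 hx
  haveI : (𝓝[orbit G y] x').NeBot := mem_closure_iff_nhdsWithin_neBot.1 hx'
  have hball : ∀ᶠ a in 𝓝[orbit G y] x, dist a x < δ₂ / 4 :=
    mem_nhdsWithin_of_mem_nhds (Metric.ball_mem_nhds x (by positivity))
  have hval : ∀ᶠ a in 𝓝[orbit G y] x, dist (bohrPick G y a • z) (bohrOp G y x z) < η / 2 :=
    (Metric.tendsto_nhds.1 (bohrOp_tendsto y hy hx hz)) (η / 2) (by positivity)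
  obtain ⟨a, ha, hax, hav⟩ := (eventually_mem_nhdsWithin.and (hball.and hval)).exists
  have hball' : ∀ᶠ a in 𝓝[orbit G y] x', dist a x' < δ₂ / 4 :=
    mem_nhdsWithin_of_mem_nhds (Metric.ball_mem_nhds x' (by positivity))
  have hval' : ∀ᶠ a in 𝓝[orbit G y] x', dist (bohrPick G y a • z') (bohrOp G y x' z') < η / 2 :=
    (Metric.tendsto_nhds.1 (bohrOp_tendsto y hy hx' hz')) (η / 2) (by positivity)
  obtain ⟨a', ha', hax', hav'⟩ := (eventually_mem_nhdsWithin.and (hball'.and hval')).exists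
  have hda : dist a a' < δ₂ := by
    have t1 := dist_triangle a x a'
    have t2 := dist_triangle x x' a'
    have : dist x x' < δ₂ / 4 := lt_of_lt_of_le hxx (min_le_left _ _)
    rw [dist_comm a' x'] at hax'
    linarith [dist_comm x' a' ▸ hax']
  have hm1 : dist (bohrPick G y a • z) (bohrPick G y a' • z) ≤ ε / 2 :=
    H2 _ _ (by rwa [bohrPick_spec ha, bohrPick_spec ha']) z hz
  have hm2 : dist (bohrPick G y a' • z) (bohrPick G y a' • z') ≤ ε / 2 :=
    H3 z hz z' hz' (lt_of_lt_of_le hzz (min_le_right _ _)) _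
  have t3 := dist_triangle4 (bohrOp G y x z) (bohrPick G y a • z) (bohrPick G y a' • z)
    (bohrOp G y x' z')
  have t4 := dist_triangle (bohrPick G y a' • z) (bohrPick G y a' • z') (bohrOp G y x' z')
  rw [dist_comm (bohrOp G y x z) (bohrPick G y a • z)] at t3
  linarith

lemma bohrOp_seq (hy : IsBohrAlmostPeriodicPt (G := G) y) {u v : ℕ → X} {x z : X}
    (hu : ∀ n, u n ∈ closure (orbit G y)) (hv : ∀ n, v n ∈ closure (orbit G y))
    (hx : x ∈ closure (orbit G y)) (hz : z ∈ closure (orbit G y))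
    (hul : Tendsto u atTop (𝓝 x)) (hvl : Tendsto v atTop (𝓝 z)) :
    Tendsto (fun n => bohrOp G y (u n) (v n)) atTop (𝓝 (bohrOp G y x z)) := by
  rw [Metric.tendsto_nhds]
  intro ε hε
  obtain ⟨δ, hδ, H⟩ := bohrOp_est y hy (half_pos hε)
  filter_upwards [Metric.tendsto_nhds.1 hul δ hδ, Metric.tendsto_nhds.1 hvl δ hδ]
    with n h1 h2
  have := H (u n) (hu n) x hx (v n) (hv n) z hz h1 h2
  linarith
end

section
variable {G X : Type*} [CommGroup G] [TopologicalSpace G] [IsTopologicalGroup G]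
  [MetricSpace X] [CompactSpace X] [MulAction G X] [ContinuousSMul G X]
variable (y : X)

lemma bohrInv_tendsto (hy : IsBohrAlmostPeriodicPt (G := G) y) {x : X}
    (hx : x ∈ closure (orbit G y)) :
    Tendsto (fun a => (bohrPick G y a)⁻¹ • y) (𝓝[orbit G y] x) (𝓝 (bohrInv G y x)) := by
  apply bohr_exists_lim y hx
  intro ε hε
  obtain ⟨δ, hδ, H⟩ := bohrL4 y hy hε
  refine ⟨δ, hδ, fun a ha a' ha' hd => ?_⟩
  exact (H (bohrPick G y a) (bohrPick G y a')
    (by rwa [bohrPick_spec ha, bohrPick_spec ha'])).le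

lemma bohrInv_mem (hy : IsBohrAlmostPeriodicPt (G := G) y) {x : X}
    (hx : x ∈ closure (orbit G y)) : bohrInv G y x ∈ closure (orbit G y) := by
  haveI : (𝓝[orbit G y] x).NeBot := mem_closure_iff_nhdsWithin_neBot.1 hx
  exact isClosed_closure.mem_of_tendsto (bohrInv_tendsto y hy hx)
    (Eventually.of_forall fun a => subset_closure ⟨(bohrPick G y a)⁻¹, rfl⟩)

lemma bohrInv_eval (hy : IsBohrAlmostPeriodicPt (G := G) y) (g : G) :
    bohrInv G y (g • y) = g⁻¹ • y := by
  have hgy : g • y ∈ closure (orbit G y) := subset_closure ⟨g, rfl⟩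
  haveI : (𝓝[orbit G y] (g • y)).NeBot := mem_closure_iff_nhdsWithin_neBot.1 hgy
  refine tendsto_nhds_unique (bohrInv_tendsto y hy hgy) ?_
  rw [Metric.tendsto_nhds]
  intro ε hε
  obtain ⟨δ, hδ, H⟩ := bohrL4 y hy hε
  filter_upwards [self_mem_nhdsWithin,
    mem_nhdsWithin_of_mem_nhds (Metric.ball_mem_nhds (g • y) hδ)] with a ha hab
  exact H (bohrPick G y a) g (by rwa [bohrPick_spec ha])

lemma bohrInv_est (hy : IsBohrAlmostPeriodicPt (G := G) y) {ε : ℝ} (hε : 0 < ε) :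
    ∃ δ > 0, ∀ x ∈ closure (orbit G y), ∀ x' ∈ closure (orbit G y),
      dist x x' < δ → dist (bohrInv G y x) (bohrInv G y x') ≤ ε := by
  obtain ⟨δ, hδ, H⟩ := bohrL4 y hy (show (0:ℝ) < ε / 2 by positivity)
  refine ⟨δ / 4, by positivity, fun x hx x' hx' hxx => ?_⟩
  refine le_of_forall_pos_le_add fun η hη => ?_
  haveI : (𝓝[orbit G y] x).NeBot := mem_closure_iff_nhdsWithin_neBot.1 hx
  haveI : (𝓝[orbit G y] x').NeBot := mem_closure_iff_nhdsWithin_neBot.1 hx'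
  have hball : ∀ᶠ a in 𝓝[orbit G y] x, dist a x < δ / 4 :=
    mem_nhdsWithin_of_mem_nhds (Metric.ball_mem_nhds x (by positivity))
  have hval : ∀ᶠ a in 𝓝[orbit G y] x,
      dist ((bohrPick G y a)⁻¹ • y) (bohrInv G y x) < η / 2 :=
    (Metric.tendsto_nhds.1 (bohrInv_tendsto y hy hx)) (η / 2) (by positivity)
  obtain ⟨a, ha, hax, hav⟩ := (eventually_mem_nhdsWithin.and (hball.and hval)).exists
  have hball' : ∀ᶠ a in 𝓝[orbit G y] x', dist a x' < δ / 4 :=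
    mem_nhdsWithin_of_mem_nhds (Metric.ball_mem_nhds x' (by positivity))
  have hval' : ∀ᶠ a in 𝓝[orbit G y] x',
      dist ((bohrPick G y a)⁻¹ • y) (bohrInv G y x') < η / 2 :=
    (Metric.tendsto_nhds.1 (bohrInv_tendsto y hy hx')) (η / 2) (by positivity)
  obtain ⟨a', ha', hax', hav'⟩ := (eventually_mem_nhdsWithin.and (hball'.and hval')).exists
  have hda : dist a a' < δ := by
    have t1 := dist_triangle a x a'
    have t2 := dist_triangle x x' a'
    rw [dist_comm a' x'] at hax'
    linarith [dist_comm x' a' ▸ hax']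
  have hm : dist ((bohrPick G y a)⁻¹ • y) ((bohrPick G y a')⁻¹ • y) < ε / 2 :=
    H _ _ (by rwa [bohrPick_spec ha, bohrPick_spec ha'])
  have t3 := dist_triangle4 (bohrInv G y x) ((bohrPick G y a)⁻¹ • y)
    ((bohrPick G y a')⁻¹ • y) (bohrInv G y x')
  rw [dist_comm (bohrInv G y x) ((bohrPick G y a)⁻¹ • y)] at t3
  linarith

lemma bohrInv_seq (hy : IsBohrAlmostPeriodicPt (G := G) y) {u : ℕ → X} {x : X}
    (hu : ∀ n, u n ∈ closure (orbit G y)) (hx : x ∈ closure (orbit G y))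
    (hul : Tendsto u atTop (𝓝 x)) :
    Tendsto (fun n => bohrInv G y (u n)) atTop (𝓝 (bohrInv G y x)) := by
  rw [Metric.tendsto_nhds]
  intro ε hε
  obtain ⟨δ, hδ, H⟩ := bohrInv_est y hy (half_pos hε)
  filter_upwards [Metric.tendsto_nhds.1 hul δ hδ] with n h1
  have := H (u n) (hu n) x hx h1
  linarith
end

/-- For a topological abelian *group* action, the orbit closure of a Bohr
almost periodic point with the induced operation `⋄` is a compact abelian
topological group: in particular every element has an inverse and inversion is
continuous. -/
theorem orbit_closure_compact_abelian_group
    {G X : Type*} [CommGroup G] [TopologicalSpace G] [IsTopologicalGroup G]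
    [MetricSpace X] [CompactSpace X] [MulAction G X] [ContinuousSMul G X]
    (y : X) (hy : IsBohrAlmostPeriodicPt (G := G) y) :
    ∃ op : X → X → X,
      ContinuousOn (fun p : X × X => op p.1 p.2)
        ((closure (MulAction.orbit G y)) ×ˢ (closure (MulAction.orbit G y))) ∧
      (∀ x ∈ closure (MulAction.orbit G y), ∀ z ∈ closure (MulAction.orbit G y),
        op x z ∈ closure (MulAction.orbit G y)) ∧
      (∀ x ∈ closure (MulAction.orbit G y), ∀ z ∈ closure (MulAction.orbit G y),
        op x z = op z x) ∧
      (∀ x ∈ closure (MulAction.orbit G y), ∀ z ∈ closure (MulAction.orbit G y),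
        ∀ w ∈ closure (MulAction.orbit G y), op (op x z) w = op x (op z w)) ∧
      (∀ g h : G, op (g • y) (h • y) = (g * h) • y) ∧
      (∀ x ∈ closure (MulAction.orbit G y), op y x = x ∧ op x y = x) ∧
      ∃ inv : X → X, ContinuousOn inv (closure (MulAction.orbit G y)) ∧
        ∀ x ∈ closure (MulAction.orbit G y),
          inv x ∈ closure (MulAction.orbit G y) ∧ op x (inv x) = y := by

  have hyK : y ∈ closure (orbit G y) := subset_closure (mem_orbit_self y)
  have heval : ∀ g h : G, bohrOp G y (g • y) (h • y) = (g * h) • y := by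
    intro g h
    rw [bohrOp_eval y hy g (subset_closure ⟨h, rfl⟩), smul_smul]
  have hcomm : ∀ x ∈ closure (orbit G y), ∀ z ∈ closure (orbit G y),
      bohrOp G y x z = bohrOp G y z x := by
    intro x hx z hz
    obtain ⟨u, hu, hul⟩ := mem_closure_iff_seq_limit.1 hx
    obtain ⟨v, hv, hvl⟩ := mem_closure_iff_seq_limit.1 hz
    choose gu hgu using hu
    choose gv hgv using hv
    have hgu2 : ∀ n, gu n • y = u n := fun n => hgu n
    have hgv2 : ∀ n, gv n • y = v n := fun n => hgv n
    have huK : ∀ n, u n ∈ closure (orbit G y) := fun n => subset_closure ⟨gu n, hgu n⟩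
    have hvK : ∀ n, v n ∈ closure (orbit G y) := fun n => subset_closure ⟨gv n, hgv n⟩
    have hpt : ∀ n, bohrOp G y (u n) (v n) = bohrOp G y (v n) (u n) := by
      intro n
      rw [← hgu2 n, ← hgv2 n, heval, heval, mul_comm]
    refine tendsto_nhds_unique (bohrOp_seq y hy huK hvK hx hz hul hvl) ?_
    exact (bohrOp_seq y hy hvK huK hz hx hvl hul).congr fun n => (hpt n).symm
  refine ⟨bohrOp G y, ?_, fun x hx z hz => bohrOp_mem y hy hx hz, hcomm, ?_, heval, ?_, 
    bohrInv G y, ?_, ?_⟩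
  · -- continuity of op
    rw [Metric.continuousOn_iff]
    rintro ⟨x, z⟩ hb ε hε
    obtain ⟨δ, hδ, H⟩ := bohrOp_est y hy (half_pos hε)
    refine ⟨δ, hδ, ?_⟩
    rintro ⟨x', z'⟩ ha hd
    rw [Prod.dist_eq] at hd
    obtain ⟨h1, h2⟩ := max_lt_iff.1 hd
    have := H x' ha.1 x hb.1 z' ha.2 z hb.2 h1 h2
    simpa using lt_of_le_of_lt this (half_lt_self hε)
  · -- associativity
    intro x hx z hz w hw
    obtain ⟨u, hu, hul⟩ := mem_closure_iff_seq_limit.1 hx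
    obtain ⟨v, hv, hvl⟩ := mem_closure_iff_seq_limit.1 hz
    obtain ⟨t, ht, htl⟩ := mem_closure_iff_seq_limit.1 hw
    choose gu hgu using hu
    choose gv hgv using hv
    choose gt hgt using ht
    have hgu2 : ∀ n, gu n • y = u n := fun n => hgu n
    have hgv2 : ∀ n, gv n • y = v n := fun n => hgv n
    have hgt2 : ∀ n, gt n • y = t n := fun n => hgt n
    have huK : ∀ n, u n ∈ closure (orbit G y) := fun n => subset_closure ⟨gu n, hgu n⟩
    have hvK : ∀ n, v n ∈ closure (orbit G y) := fun n => subset_closure ⟨gv n, hgv n⟩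
    have htK : ∀ n, t n ∈ closure (orbit G y) := fun n => subset_closure ⟨gt n, hgt n⟩
    have hpt : ∀ n, bohrOp G y (bohrOp G y (u n) (v n)) (t n)
        = bohrOp G y (u n) (bohrOp G y (v n) (t n)) := by
      intro n
      rw [← hgu2 n, ← hgv2 n, ← hgt2 n, heval, heval, heval, heval, mul_assoc]
    have hA : Tendsto (fun n => bohrOp G y (bohrOp G y (u n) (v n)) (t n)) atTop
        (𝓝 (bohrOp G y (bohrOp G y x z) w)) :=
      bohrOp_seq y hy (fun n => bohrOp_mem y hy (huK n) (hvK n)) htK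
        (bohrOp_mem y hy hx hz) hw (bohrOp_seq y hy huK hvK hx hz hul hvl) htl
    have hB : Tendsto (fun n => bohrOp G y (u n) (bohrOp G y (v n) (t n))) atTop
        (𝓝 (bohrOp G y x (bohrOp G y z w))) :=
      bohrOp_seq y hy huK (fun n => bohrOp_mem y hy (hvK n) (htK n)) hx
        (bohrOp_mem y hy hz hw) hul (bohrOp_seq y hy hvK htK hz hw hvl htl)
    exact tendsto_nhds_unique hA (hB.congr fun n => (hpt n).symm)
  · -- identity
    intro x hx
    have h1 := bohrOp_eval y hy 1 hx
    rw [one_smul, one_smul] at h1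
    exact ⟨h1, (hcomm x hx y hyK).trans h1⟩
  · -- continuity of inv
    rw [Metric.continuousOn_iff]
    intro x hx ε hε
    obtain ⟨δ, hδ, H⟩ := bohrInv_est y hy (half_pos hε)
    refine ⟨δ, hδ, fun x' hx' hd => ?_⟩
    exact lt_of_le_of_lt (H x' hx' x hx hd) (half_lt_self hε)
  · -- inverses
    intro x hx
    refine ⟨bohrInv_mem y hy hx, ?_⟩
    obtain ⟨u, hu, hul⟩ := mem_closure_iff_seq_limit.1 hx
    choose gu hgu using hu
    have hgu2 : ∀ n, gu n • y = u n := fun n => hgu n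
    have huK : ∀ n, u n ∈ closure (orbit G y) := fun n => subset_closure ⟨gu n, hgu n⟩
    have hpt : ∀ n, bohrOp G y (u n) (bohrInv G y (u n)) = y := by
      intro n
      rw [← hgu2 n, bohrInv_eval y hy, bohrOp_eval y hy _ (subset_closure ⟨(gu n)⁻¹, rfl⟩),
        smul_inv_smul]
    have hA : Tendsto (fun n => bohrOp G y (u n) (bohrInv G y (u n))) atTop
        (𝓝 (bohrOp G y x (bohrInv G y x))) :=
      bohrOp_seq y hy huK (fun n => bohrInv_mem y hy (huK n)) hx
        (bohrInv_mem y hy hx) hul (bohrInv_seq y hy huK hx hul)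
    have hB : Tendsto (fun n => bohrOp G y (u n) (bohrInv G y (u n))) atTop (𝓝 y) :=
      tendsto_const_nhds.congr fun n => (hpt n).symm
    exact tendsto_nhds_unique hA hB
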